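/- Let G be a group and M a crossed module over the group algebra kG, i.e. a kG-module with a decomposition M = ⊕_{x∈G} M_x such that g·M_x ⊆ M_{gxg^{-1}} for all g,x ∈ G. Then M ≅ ⊕_{g∈t(G)} M_{[g]} as crossed modules, where M_{[g]} = ⊕_{x∈[g]} M_x, and for each g ∈ t(G) there is an isomorphism of crossed modules M_{[g]} ≅ Ind_{kG_g}^{kG} M_g = kG ⊗_{kG_g} M_g, where G_g is the centralizer of g in G. Moreover, M is modular if and only if g·m = m for every g ∈ G and every m ∈ M_g. -/

import Mathlib

set_option linter.unusedSectionVars false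
set_option linter.unusedVariables false
set_option maxHeartbeats 1000000


/-!
STATEMENT 8: Let G be a group and M a crossed module over the group algebra kG, i.e. a
kG-module with a decomposition M = ⊕_{x∈G} M_x such that g·M_x ⊆ M_{gxg⁻¹}.  Then M decomposes
as the direct sum, over conjugacy classes, of the crossed submodules M_{[g]} = ⊕_{x∈[g]} M_x,
and M_{[g]} ≅ Ind_{kG_g}^{kG} M_g = kG ⊗_{kG_g} M_g (an isomorphism of crossed modules), where
G_g is the centralizer of g.  Moreover M is modular iff g·m = m for all g and m ∈ M_g.
-/

noncomputable section
open Finsupp Submodule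
open scoped DirectSum

variable (k : Type) [Field k]

abbrev FreeMod (X : Type) : Type := X →₀ k
def fgen {X : Type} (x : X) : FreeMod k X := Finsupp.single x 1

variable (G : Type) [Group G] [DecidableEq G] [DecidableEq (ConjClasses G)]
variable (M : Type) [AddCommGroup M] [Module k M]
variable [DistribMulAction G M] [SMulCommClass G k M]
variable (D : G → Submodule k M)

/-- The crossed-module condition `g · M_x ⊆ M_{g x g⁻¹}`. -/
def IsCrossedDecomp : Prop :=
  DirectSum.IsInternal D ∧ ∀ (g x : G), ∀ m ∈ D x, g • m ∈ D (g * x * g⁻¹)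

/-- `M_{[g]} = ⊕_{x ∈ [g]} M_x`, the component of a conjugacy class. -/
def Mclass (c : ConjClasses G) : Submodule k M :=
  ⨆ (x : G) (_ : ConjClasses.mk x = c), D x

/-- Modularity of the crossed module: for every decomposition of `m` into homogeneous
components `m = Σ_x m_x` one has `Σ_x x • m_x = m`. -/
def IsModularDecomp : Prop :=
  ∀ (s : Finset G) (comp : G → M), (∀ x ∈ s, comp x ∈ D x) →
    ∑ x ∈ s, x • comp x = ∑ x ∈ s, comp x

/-- Relations presenting the induced module `kG ⊗_{kG_g} M_g`. -/
def indGRels (g : G) : Set (FreeMod k (G × ↥(D g))) :=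
  { z | (∃ (x : G) (m m' : ↥(D g)),
          z = fgen k (x, m + m') - fgen k (x, m) - fgen k (x, m')) ∨
        (∃ (x : G) (c : k) (m : ↥(D g)),
          z = fgen k (x, c • m) - c • fgen k (x, m)) ∨
        (∃ (x h : G) (_ : h ∈ Subgroup.centralizer ({g} : Set G)) (m m' : ↥(D g)),
          (m' : M) = h • (m : M) ∧ z = fgen k (x * h, m) - fgen k (x, m')) }

/-- The induced module `Ind_{kG_g}^{kG} M_g = kG ⊗_{kG_g} M_g`. -/
abbrev IndG (g : G) : Type :=
  FreeMod k (G × ↥(D g)) ⧸ Submodule.span k (indGRels k G M D g)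

/-- The pure tensor `x ⊗ m` in `Ind_{kG_g}^{kG} M_g`. -/
def indGen (g : G) (x : G) (m : ↥(D g)) : IndG k G M D g :=
  Submodule.Quotient.mk (fgen k (x, m))

section Aux
variable {k G M D}

def decE (h : DirectSum.IsInternal D) : M ≃ₗ[k] ⨁ x, ↥(D x) :=
  (LinearEquiv.ofBijective (DirectSum.coeLinearMap D) h).symm

lemma decE_symm_apply (h : DirectSum.IsInternal D) (v : ⨁ x, ↥(D x)) :
    (decE h).symm v = DirectSum.coeLinearMap D v := rfl

lemma decE_of_mem (h : DirectSum.IsInternal D) {y : G} {m : M} (hm : m ∈ D y) :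
    decE h m = DirectSum.of (fun x => ↥(D x)) y ⟨m, hm⟩ := by
  apply (decE h).symm.injective
  rw [LinearEquiv.symm_apply_apply, decE_symm_apply, DirectSum.coeLinearMap_of]

lemma coeLM_decE (h : DirectSum.IsInternal D) (m : M) :
    DirectSum.coeLinearMap D (decE h m) = m := by
  rw [← decE_symm_apply h, LinearEquiv.symm_apply_apply]

lemma D_le_Mclass (y : G) : D y ≤ Mclass k G M D (ConjClasses.mk y) :=
  le_iSup_of_le y (le_iSup_of_le rfl le_rfl)

lemma mk_conj (x g : G) : ConjClasses.mk (x * g * x⁻¹) = ConjClasses.mk g :=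
  ConjClasses.mk_eq_mk_iff_isConj.mpr (isConj_iff.mpr ⟨x⁻¹, by group⟩)

lemma Mclass_component_eq_zero (h : DirectSum.IsInternal D) {c : ConjClasses G} {m : M}
    (hm : m ∈ Mclass k G M D c) {x : G} (hx : ConjClasses.mk x ≠ c) : decE h m x = 0 := by
  have hle : Mclass k G M D c ≤
      LinearMap.ker ((DirectSum.component k G (fun x => ↥(D x)) x) ∘ₗ (decE h).toLinearMap) := by
    refine iSup₂_le fun y hy => ?_
    intro m hm'
    have hd : decE h m = DirectSum.of (fun x => ↥(D x)) y ⟨m, hm'⟩ := decE_of_mem h hm'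
    simp only [LinearMap.mem_ker, LinearMap.coe_comp, Function.comp_apply,
      LinearEquiv.coe_coe, hd]
    rw [← DirectSum.apply_eq_component]
    exact DirectSum.of_eq_of_ne _ _ _ (fun hxy => hx (hxy ▸ hy))
  have := hle hm
  simpa only [LinearMap.mem_ker, LinearMap.coe_comp, Function.comp_apply,
    LinearEquiv.coe_coe, ← DirectSum.apply_eq_component] using this

lemma mem_Mclass_of_forall (h : DirectSum.IsInternal D) {c : ConjClasses G} (m : M)
    (hm : ∀ x : G, decE h m x ≠ 0 → ConjClasses.mk x = c) : m ∈ Mclass k G M D c := by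
  classical
  have hrec : m = DirectSum.coeLinearMap D (decE h m) := (coeLM_decE h m).symm
  rw [hrec, ← DirectSum.sum_support_of (x := decE h m), map_sum]
  refine Submodule.sum_mem _ fun x hx => ?_
  rw [DirectSum.coeLinearMap_of]
  have hx' : decE h m x ≠ 0 := by simpa using DFinsupp.mem_support_iff.mp hx
  have hD : ((decE h m x : ↥(D x)) : M) ∈ D x := (decE h m x).2
  have := D_le_Mclass (D := D) x hD
  rwa [hm x hx'] at this

-- (a) part 1
lemma isInternal_Mclass (hcm : IsCrossedDecomp k G M D) :
    DirectSum.IsInternal (fun c : ConjClasses G => Mclass k G M D c) := by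
  rw [DirectSum.isInternal_submodule_iff_iSupIndep_and_iSup_eq_top]
  constructor
  · intro c
    rw [_root_.disjoint_iff, Submodule.eq_bot_iff]
    intro m hm
    obtain ⟨hm1, hm2⟩ := Submodule.mem_inf.mp hm
    have h1 : ∀ x, ConjClasses.mk x ≠ c → decE hcm.1 m x = 0 := fun x hx =>
      Mclass_component_eq_zero hcm.1 hm1 hx
    have h2 : ∀ x, ConjClasses.mk x = c → decE hcm.1 m x = 0 := by
      intro x hx
      have hle : (⨆ c', ⨆ (_ : c' ≠ c), Mclass k G M D c') ≤
          LinearMap.ker ((DirectSum.component k G (fun x => ↥(D x)) x) ∘ₗ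
            (decE hcm.1).toLinearMap) := by
        refine iSup₂_le fun c' hc' => ?_
        intro m hm
        have := Mclass_component_eq_zero hcm.1 hm (x := x) (by rw [hx]; exact fun hh => hc' hh.symm)
        simpa only [LinearMap.mem_ker, LinearMap.coe_comp, Function.comp_apply,
          LinearEquiv.coe_coe, ← DirectSum.apply_eq_component] using this
      have := hle hm2
      simpa only [LinearMap.mem_ker, LinearMap.coe_comp, Function.comp_apply,
        LinearEquiv.coe_coe, ← DirectSum.apply_eq_component] using this
    have hz : decE hcm.1 m = 0 := by
      refine DFinsupp.ext fun x => ?_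
      by_cases hx : ConjClasses.mk x = c
      · rw [h2 x hx]; rfl
      · rw [h1 x hx]; rfl
    exact (LinearEquiv.map_eq_zero_iff _).mp hz
  · rw [eq_top_iff,
      ← ((DirectSum.isInternal_submodule_iff_iSupIndep_and_iSup_eq_top D).mp hcm.1).2]
    exact iSup_le fun x => le_trans (D_le_Mclass x) (le_iSup _ _)

-- (a) part 2
lemma Mclass_smul (hcm : IsCrossedDecomp k G M D) (c : ConjClasses G) (g : G) {m : M}
    (hm : m ∈ Mclass k G M D c) : g • m ∈ Mclass k G M D c := by
  have hle : Submodule.map (DistribMulAction.toLinearMap k M g) (Mclass k G M D c) ≤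
      Mclass k G M D c := by
    rw [Mclass, Submodule.map_iSup]
    refine iSup_le fun x => ?_
    rw [Submodule.map_iSup]
    refine iSup_le fun hx => ?_
    rintro m' ⟨mm, hmm, rfl⟩
    have h1 := hcm.2 g x mm hmm
    have h2 := D_le_Mclass (D := D) (g * x * g⁻¹) h1
    rw [mk_conj, hx] at h2
    exact h2
  exact hle ⟨m, hm, rfl⟩

open scoped Classical in
def conjRep (g y : G) : G := if h : IsConj g y then (isConj_iff.mp h).choose else 1

lemma conjRep_spec {g y : G} (h : IsConj g y) : conjRep g y * g * (conjRep g y)⁻¹ = y := by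
  rw [conjRep, dif_pos h]
  exact (isConj_iff.mp h).choose_spec

def phiFree (g : G) : FreeMod k (G × ↥(D g)) →ₗ[k] M :=
  Finsupp.lift M k _ (fun p => p.1 • (p.2 : M))

lemma phiFree_fgen (g x : G) (m : ↥(D g)) :
    phiFree (D := D) g (fgen k (x, m)) = x • (m : M) := by
  rw [phiFree, fgen, Finsupp.lift_apply, Finsupp.sum_single_index] <;> simp

lemma span_rels_le_ker (g : G) :
    Submodule.span k (indGRels k G M D g) ≤ LinearMap.ker (phiFree (D := D) g) := by
  rw [Submodule.span_le]
  rintro z (⟨x, m, m', rfl⟩ | ⟨x, c, m, rfl⟩ | ⟨x, h, hmem, m, m', hm', rfl⟩) <;>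
    simp only [SetLike.mem_coe, LinearMap.mem_ker, map_sub, map_smul, phiFree_fgen]
  · rw [Submodule.coe_add, smul_add]; abel
  · rw [Submodule.coe_smul, smul_comm]; abel
  · rw [hm', mul_smul]; abel

lemma phiFree_mem (hcm : IsCrossedDecomp k G M D) (g : G) (z : FreeMod k (G × ↥(D g))) :
    phiFree (D := D) g z ∈ Mclass k G M D (ConjClasses.mk g) := by
  induction z using Finsupp.induction_linear with
  | zero => simp only [map_zero]; exact zero_mem _
  | add f f' hf hf' => rw [map_add]; exact add_mem hf hf'
  | single p c =>
    have hpc : (Finsupp.single p c : FreeMod k (G × ↥(D g))) = c • fgen k p := by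
      simp [fgen, Finsupp.smul_single]
    rw [hpc, map_smul]
    refine Submodule.smul_mem _ _ ?_
    obtain ⟨x, m⟩ := p
    rw [phiFree_fgen]
    have h1 := hcm.2 x g m m.2
    have h2 := D_le_Mclass (D := D) (x * g * x⁻¹) h1
    rwa [mk_conj] at h2

def eFwd (hcm : IsCrossedDecomp k G M D) (g : G) :
    IndG k G M D g →ₗ[k] ↥(Mclass k G M D (ConjClasses.mk g)) :=
  Submodule.liftQ _ (LinearMap.codRestrict _ (phiFree (D := D) g) (phiFree_mem hcm g))
    (by intro z hz
        rw [LinearMap.mem_ker]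
        apply Subtype.ext
        simpa using (LinearMap.mem_ker.mp (span_rels_le_ker g hz)))

lemma eFwd_indGen (hcm : IsCrossedDecomp k G M D) (g x : G) (m : ↥(D g)) :
    ((eFwd hcm g (indGen k G M D g x m)) : M) = x • (m : M) := by
  rw [indGen, eFwd, Submodule.liftQ_apply, LinearMap.codRestrict_apply, phiFree_fgen]

def insLin (g x : G) : ↥(D g) →ₗ[k] IndG k G M D g where
  toFun m := indGen k G M D g x m
  map_add' m m' := by
    simp only [indGen]
    rw [← Submodule.Quotient.mk_add, Submodule.Quotient.eq]
    exact Submodule.subset_span (Or.inl ⟨x, m, m', by abel⟩)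
  map_smul' c m := by
    simp only [indGen, RingHom.id_apply]
    rw [← Submodule.Quotient.mk_smul, Submodule.Quotient.eq]
    exact Submodule.subset_span (Or.inr (Or.inl ⟨x, c, m, by abel⟩))

lemma conj_mem_Dg (hcm : IsCrossedDecomp k G M D) {g x : G}
    (hx : ConjClasses.mk x = ConjClasses.mk g) {m : M} (hm : m ∈ D x) :
    (conjRep g x)⁻¹ • m ∈ D g := by
  have hconj : IsConj g x := (ConjClasses.mk_eq_mk_iff_isConj.mp hx).symm
  have h1 := hcm.2 (conjRep g x)⁻¹ x m hm
  set s := conjRep g x with hsdef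
  have hs : s * g * s⁻¹ = x := conjRep_spec hconj
  have h2 : s⁻¹ * x * s⁻¹⁻¹ = g := by rw [inv_inv, ← hs]; group
  rwa [h2] at h1

def compMap (hcm : IsCrossedDecomp k G M D) (g x : G) : ↥(D x) →ₗ[k] IndG k G M D g :=
  if hx : ConjClasses.mk x = ConjClasses.mk g then
    insLin g (conjRep g x) ∘ₗ
      LinearMap.restrict (DistribMulAction.toLinearMap k M (conjRep g x)⁻¹)
        (fun m hm => conj_mem_Dg hcm hx hm)
  else 0

lemma compMap_eq (hcm : IsCrossedDecomp k G M D) {g x : G}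
    (hx : ConjClasses.mk x = ConjClasses.mk g) (mx : ↥(D x)) :
    compMap hcm g x mx =
      indGen k G M D g (conjRep g x) ⟨(conjRep g x)⁻¹ • (mx : M), conj_mem_Dg hcm hx mx.2⟩ := by
  rw [compMap, dif_pos hx]
  rfl

def eBwd (hcm : IsCrossedDecomp k G M D) (g : G) : M →ₗ[k] IndG k G M D g :=
  (DirectSum.toModule k G _ (compMap hcm g)) ∘ₗ (decE hcm.1).toLinearMap

lemma eBwd_smul (hcm : IsCrossedDecomp k G M D) (g x : G) (m : ↥(D g)) :
    eBwd hcm g (x • (m : M)) = indGen k G M D g x m := by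
  have hmem : x • (m : M) ∈ D (x * g * x⁻¹) := hcm.2 x g m m.2
  have hdec := decE_of_mem hcm.1 hmem
  rw [eBwd, LinearMap.comp_apply, LinearEquiv.coe_coe, hdec,
    ← DirectSum.lof_eq_of k, DirectSum.toModule_lof]
  have hyc : ConjClasses.mk (x * g * x⁻¹) = ConjClasses.mk g := mk_conj x g
  rw [compMap_eq hcm hyc]
  set s := conjRep g (x * g * x⁻¹) with hsdef
  have hs : s * g * s⁻¹ = x * g * x⁻¹ :=
    conjRep_spec ((ConjClasses.mk_eq_mk_iff_isConj.mp hyc).symm)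
  have hcent : s⁻¹ * x ∈ Subgroup.centralizer ({g} : Set G) := by
    rw [Subgroup.mem_centralizer_iff]
    intro a ha
    rw [Set.mem_singleton_iff] at ha
    subst ha
    have h3 : a * (s⁻¹ * x) = s⁻¹ * (s * a * s⁻¹) * x := by group
    rw [hs] at h3
    rw [h3]; group
  have hmul : s * (s⁻¹ * x) = x := by group
  have hm'eq : ((⟨s⁻¹ • (x • (m : M)), conj_mem_Dg hcm hyc hmem⟩ : ↥(D g)) : M)
      = (s⁻¹ * x) • (m : M) := by
    rw [mul_smul]
  have hrel : (fgen k (x, m) - fgen k (s, ⟨s⁻¹ • (x • (m : M)), conj_mem_Dg hcm hyc hmem⟩)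
      : FreeMod k (G × ↥(D g))) ∈ Submodule.span k (indGRels k G M D g) := by
    refine Submodule.subset_span (Or.inr (Or.inr ⟨s, s⁻¹ * x, hcent, m,
      ⟨s⁻¹ • (x • (m : M)), conj_mem_Dg hcm hyc hmem⟩, hm'eq, ?_⟩))
    rw [hmul]
  simp only [indGen]
  rw [Submodule.Quotient.eq]
  have := neg_mem hrel
  simpa [neg_sub] using this

lemma eFwd_eBwd (hcm : IsCrossedDecomp k G M D) (g : G) (m : M)
    (hm : m ∈ Mclass k G M D (ConjClasses.mk g)) :
    ((eFwd hcm g (eBwd hcm g m)) : M) = m := by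
  classical
  set v := decE hcm.1 m with hv
  have hm' : ∀ x, ConjClasses.mk x ≠ ConjClasses.mk g → v x = 0 := fun x hx =>
    Mclass_component_eq_zero hcm.1 hm hx
  have hvsum : (∑ x ∈ DFinsupp.support v, DirectSum.of (fun x => ↥(D x)) x (v x)) = v :=
    DirectSum.sum_support_of v
  have htm : ∀ w : ⨁ x, ↥(D x), DirectSum.toModule k G (IndG k G M D g) (compMap hcm g) w
      = ∑ x ∈ DFinsupp.support w, compMap hcm g x (w x) := by
    intro w
    conv_lhs => rw [← DirectSum.sum_support_of (x := w)]
    rw [map_sum]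
    refine Finset.sum_congr rfl fun x _ => ?_
    rw [← DirectSum.lof_eq_of k, DirectSum.toModule_lof]
  have hb : eBwd hcm g m = ∑ x ∈ DFinsupp.support v, compMap hcm g x (v x) := by
    rw [eBwd, LinearMap.comp_apply, LinearEquiv.coe_coe, ← hv, htm]
  rw [hb, map_sum]
  rw [AddSubmonoidClass.coe_finset_sum]
  have hterm : ∀ x ∈ DFinsupp.support v,
      ((eFwd hcm g (compMap hcm g x (v x))) : M) = ((v x : ↥(D x)) : M) := by
    intro x hx
    have hxc : ConjClasses.mk x = ConjClasses.mk g := by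
      by_contra h
      exact (DFinsupp.mem_support_iff.mp hx) (hm' x h)
    rw [compMap_eq hcm hxc, eFwd_indGen]
    exact smul_inv_smul _ _
  rw [Finset.sum_congr rfl hterm]
  conv_rhs => rw [← coeLM_decE hcm.1 m, ← hv, ← hvsum]
  rw [map_sum]
  exact Finset.sum_congr rfl fun x _ => (DirectSum.coeLinearMap_of _ _ _).symm


lemma eBwd_eFwd (hcm : IsCrossedDecomp k G M D) (g : G) (q : IndG k G M D g) :
    eBwd hcm g ((eFwd hcm g q : M)) = q := by
  obtain ⟨z, rfl⟩ := Submodule.Quotient.mk_surjective _ q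
  induction z using Finsupp.induction_linear with
  | zero => simp
  | add f f' hf hf' =>
    simp only [Submodule.Quotient.mk_add, map_add, Submodule.coe_add, hf, hf']
  | single p c =>
    obtain ⟨x, m⟩ := p
    have hsingle : (Finsupp.single (x, m) c : FreeMod k (G × ↥(D g))) = c • fgen k (x, m) := by
      simp [fgen, Finsupp.smul_single]
    have hgen : eBwd hcm g ((eFwd hcm g (indGen k G M D g x m) : M)) =
        indGen k G M D g x m := by
      rw [eFwd_indGen, eBwd_smul]
    rw [hsingle, Submodule.Quotient.mk_smul, map_smul, SetLike.val_smul, map_smul]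
    rw [show Submodule.Quotient.mk (fgen k (x, m)) = indGen k G M D g x m from rfl, hgen]

def eEquiv (hcm : IsCrossedDecomp k G M D) (g : G) :
    IndG k G M D g ≃ₗ[k] ↥(Mclass k G M D (ConjClasses.mk g)) :=
  LinearEquiv.ofLinear (eFwd hcm g)
    (eBwd hcm g ∘ₗ (Mclass k G M D (ConjClasses.mk g)).subtype)
    (LinearMap.ext fun mm => by
      simp only [LinearMap.comp_apply, Submodule.subtype_apply, LinearMap.id_apply]
      exact Subtype.ext (eFwd_eBwd hcm g mm mm.2))
    (LinearMap.ext fun q => by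
      simp only [LinearMap.comp_apply, Submodule.subtype_apply, LinearMap.id_apply]
      exact eBwd_eFwd hcm g q)

lemma eEquiv_indGen (hcm : IsCrossedDecomp k G M D) (g x : G) (m : ↥(D g)) :
    ((eEquiv hcm g (indGen k G M D g x m)) : M) = x • (m : M) := by
  rw [eEquiv, LinearEquiv.ofLinear_apply, eFwd_indGen]

lemma modular_iff_fix : IsModularDecomp k G M D ↔ ∀ g : G, ∀ m ∈ D g, g • m = m := by
  constructor
  · intro hmod g m hm
    have := hmod {g} (fun x => if x = g then m else 0) ?_
    · simpa using this
    · intro x hx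
      rw [Finset.mem_singleton] at hx
      subst hx
      simpa using hm
  · intro hfix s comp hcomp
    exact Finset.sum_congr rfl fun x hx => hfix x _ (hcomp x hx)

end Aux

/-- STATEMENT 8. -/
theorem crossed_module_over_group_algebra_decomposition
    (hcm : IsCrossedDecomp k G M D) :
    -- (a) M is the direct sum of the crossed submodules M_{[g]}, indexed by conjugacy classes
    DirectSum.IsInternal (fun c : ConjClasses G => Mclass k G M D c) ∧
    (∀ (c : ConjClasses G) (g : G), ∀ m ∈ Mclass k G M D c, g • m ∈ Mclass k G M D c) ∧
    -- (b) M_{[g]} ≅ Ind_{kG_g}^{kG} M_g as crossed modules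
    (∀ g : G, ∃ e : IndG k G M D g ≃ₗ[k] ↥(Mclass k G M D (ConjClasses.mk g)),
      (∀ (y x : G) (m : ↥(D g)),
        (e (indGen k G M D g (y * x) m) : M) = y • (e (indGen k G M D g x m) : M)) ∧
      (∀ (x : G) (m : ↥(D g)),
        (e (indGen k G M D g x m) : M) ∈ D (x * g * x⁻¹))) ∧
    -- (c) M is modular iff every g acts as the identity on M_g
    (IsModularDecomp k G M D ↔ ∀ g : G, ∀ m ∈ D g, g • m = m) := by
  refine ⟨isInternal_Mclass hcm, fun c g m hm => Mclass_smul hcm c g hm, fun g => ?_,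
    modular_iff_fix⟩
  refine ⟨eEquiv hcm g, fun y x m => ?_, fun x m => ?_⟩
  · rw [eEquiv_indGen, eEquiv_indGen, mul_smul]
  · rw [eEquiv_indGen]
    exact hcm.2 x g m m.2

end
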